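/- Let p, q : ℝ → ℝ be continuous, let L > 0, and let w₁, w₂ : ℝ → ℝ be twice continuously differentiable solutions of the linear ODE v'' + p·v' + q·v = 0 on ℝ. Assume that w₁ is odd, L-periodic, and not identically zero, and that w₂ is even and not L-periodic. Then every twice continuously differentiable solution v of v'' + p·v' + q·v = 0 on ℝ which is both even and L-periodic is identically zero. -/

import Mathlib

open Set Real

lemma uniq_zero (p q : ℝ → ℝ) (hp : Continuous p) (hq : Continuous q)
    (u : ℝ → ℝ) (hu : ContDiff ℝ 2 u)
    (hode : ∀ z : ℝ, deriv (deriv u) z + p z * deriv u z + q z * u z = 0)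
    (h0 : u 0 = 0) (h1 : deriv u 0 = 0) : u = 0 := by
  have hud : Differentiable ℝ u := hu.differentiable (by norm_num)
  have hu' : ContDiff ℝ 1 (deriv u) := by
    have := (contDiff_succ_iff_deriv (n := 1)).mp (by exact_mod_cast hu)
    exact this.2.2
  have hud' : Differentiable ℝ (deriv u) := hu'.differentiable one_ne_zero
  funext x
  show u x = 0
  set R : ℝ := |x| + 1 with hR
  have hRpos : 0 < R := by positivity
  -- clamp
  set cl : ℝ → ℝ := fun t => max (-R) (min R t) with hcl
  have hclmem : ∀ t, cl t ∈ Icc (-R) R := by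
    intro t
    constructor
    · exact le_max_left _ _
    · exact max_le (by linarith) (min_le_left _ _)
  have hcleq : ∀ t ∈ Icc (-R) R, cl t = t := by
    intro t ht
    simp only [hcl]
    rw [min_eq_right ht.2, max_eq_right ht.1]
  obtain ⟨P, hP⟩ := isCompact_Icc.exists_bound_of_continuousOn (s := Icc (-R) R) hp.continuousOn
  obtain ⟨Q, hQ⟩ := isCompact_Icc.exists_bound_of_continuousOn (s := Icc (-R) R) hq.continuousOn
  set P' : ℝ := max P 0 with hP'
  set Q' : ℝ := max Q 0 with hQ'
  have hPb : ∀ t, |p (cl t)| ≤ P' := fun t => le_trans (hP _ (hclmem t)) (le_max_left _ _)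
  have hQb : ∀ t, |q (cl t)| ≤ Q' := fun t => le_trans (hQ _ (hclmem t)) (le_max_left _ _)
  have hP0 : (0:ℝ) ≤ P' := le_max_right _ _
  have hQ0 : (0:ℝ) ≤ Q' := le_max_right _ _
  set K : NNReal := ⟨1 + P' + Q', by positivity⟩ with hK
  set V : ℝ → ℝ × ℝ → ℝ × ℝ :=
    fun t y => (y.2, -(p (cl t)) * y.2 - (q (cl t)) * y.1) with hV
  have hlip : ∀ t, LipschitzWith K (V t) := by
    intro t
    apply LipschitzWith.of_dist_le_mul
    intro y y'
    rw [Prod.dist_eq, Prod.dist_eq]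
    simp only [hV, Real.dist_eq]
    have h2 : |y.2 - y'.2| ≤ max |y.1 - y'.1| |y.2 - y'.2| := le_max_right _ _
    have h1' : |y.1 - y'.1| ≤ max |y.1 - y'.1| |y.2 - y'.2| := le_max_left _ _
    have key : |(-(p (cl t)) * y.2 - (q (cl t)) * y.1) - (-(p (cl t)) * y'.2 - (q (cl t)) * y'.1)|
        ≤ P' * |y.2 - y'.2| + Q' * |y.1 - y'.1| := by
      have : (-(p (cl t)) * y.2 - (q (cl t)) * y.1) - (-(p (cl t)) * y'.2 - (q (cl t)) * y'.1)
          = -(p (cl t)) * (y.2 - y'.2) + (-(q (cl t))) * (y.1 - y'.1) := by ring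
      rw [this]
      refine le_trans (abs_add_le _ _) ?_
      rw [abs_mul, abs_mul, abs_neg, abs_neg]
      gcongr
      exacts [hPb t, hQb t]
    have hKval : (K : ℝ) = 1 + P' + Q' := rfl
    rw [hKval]
    apply max_le
    · nlinarith [abs_nonneg (y.1 - y'.1), abs_nonneg (y.2 - y'.2)]
    · calc |(-(p (cl t)) * y.2 - (q (cl t)) * y.1) - (-(p (cl t)) * y'.2 - (q (cl t)) * y'.1)|
          ≤ P' * |y.2 - y'.2| + Q' * |y.1 - y'.1| := key
        _ ≤ (1 + P' + Q') * max |y.1 - y'.1| |y.2 - y'.2| := by nlinarith [abs_nonneg (y.1 - y'.1), abs_nonneg (y.2 - y'.2)]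
  set f : ℝ → ℝ × ℝ := fun t => (u t, deriv u t) with hf
  have hfd : ∀ t ∈ Ioo (-R) R, HasDerivAt f (V t (f t)) t := by
    intro t ht
    have h1t : HasDerivAt u (deriv u t) t := (hud t).hasDerivAt
    have h2t : HasDerivAt (deriv u) (deriv (deriv u) t) t := (hud' t).hasDerivAt
    have := h1t.prodMk h2t
    convert this using 1
    simp only [hV, hf]
    have := hode t
    rw [hcleq t (Ioo_subset_Icc_self ht)]
    rw [Prod.mk.injEq]
    exact ⟨rfl, by linarith [hode t]⟩
  have hg : ∀ t ∈ Ioo (-R) R, HasDerivAt (fun _ : ℝ => ((0:ℝ),(0:ℝ))) (V t ((0:ℝ),(0:ℝ))) t := by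
    intro t ht
    have : V t ((0:ℝ),(0:ℝ)) = (0,0) := by simp [hV]
    rw [this]
    exact hasDerivAt_const t _
  have heq := ODE_solution_unique_of_mem_Icc (s := fun _ => (univ : Set (ℝ × ℝ)))
    (hv := fun t _ => (hlip t).lipschitzOnWith)
    (ht := show (0:ℝ) ∈ Ioo (-R) R by constructor <;> [linarith; linarith])
    (hf := (hud.continuous.prodMk hud'.continuous).continuousOn)
    (hf' := hfd) (hfs := fun _ _ => trivial)
    (hg := continuousOn_const)
    (hg' := hg) (hgs := fun _ _ => trivial)
    (heq := by simp [hf, h0, h1])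
  have hx : x ∈ Icc (-R) R := by
    constructor <;> [nlinarith [abs_nonneg x, neg_abs_le x]; nlinarith [le_abs_self x]]
  have := heq hx
  have : f x = (0,0) := this
  exact congrArg Prod.fst this

lemma sub_smul_ode (p q : ℝ → ℝ) (w v : ℝ → ℝ) (hw : ContDiff ℝ 2 w) (hv : ContDiff ℝ 2 v)
    (hwode : ∀ z : ℝ, deriv (deriv w) z + p z * deriv w z + q z * w z = 0)
    (hvode : ∀ z : ℝ, deriv (deriv v) z + p z * deriv v z + q z * v z = 0) (c : ℝ) :
    (∀ z : ℝ, deriv (fun z => w z - c * v z) z = deriv w z - c * deriv v z) ∧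
    (∀ z : ℝ, deriv (deriv (fun z => w z - c * v z)) z
        + p z * deriv (fun z => w z - c * v z) z + q z * (w z - c * v z) = 0) := by
  have hwd : Differentiable ℝ w := hw.differentiable (by norm_num)
  have hvd : Differentiable ℝ v := hv.differentiable (by norm_num)
  have hwd' : Differentiable ℝ (deriv w) :=
    ((contDiff_succ_iff_deriv (n := 1)).mp (by exact_mod_cast hw)).2.2.differentiable one_ne_zero
  have hvd' : Differentiable ℝ (deriv v) :=
    ((contDiff_succ_iff_deriv (n := 1)).mp (by exact_mod_cast hv)).2.2.differentiable one_ne_zero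
  have hd1 : ∀ z : ℝ, deriv (fun z => w z - c * v z) z = deriv w z - c * deriv v z := by
    intro z
    rw [deriv_fun_sub (hwd z) ((hvd z).const_mul c), deriv_const_mul c (hvd z)]
  refine ⟨hd1, ?_⟩
  intro z
  have he : deriv (fun z => w z - c * v z) = fun z => deriv w z - c * deriv v z := funext hd1
  have hd2 : deriv (deriv (fun z => w z - c * v z)) z
      = deriv (deriv w) z - c * deriv (deriv v) z := by
    rw [he, deriv_fun_sub (hwd' z) ((hvd' z).const_mul c), deriv_const_mul c (hvd' z)]
  rw [hd2, hd1 z]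
  have := hwode z
  have := hvode z
  linear_combination hwode z - c * hvode z

lemma even_deriv_zero (v : ℝ → ℝ) (hv : ∀ z : ℝ, v (-z) = v z) : deriv v 0 = 0 := by
  have he : (fun z : ℝ => v (-z)) = v := funext hv
  have := deriv_comp_neg (f := v) (x := (0:ℝ))
  rw [he, neg_zero] at this
  linarith

theorem stmt_13 (p q : ℝ → ℝ) (hp : Continuous p) (hq : Continuous q)
    (L : ℝ) (hL : 0 < L) (w₁ w₂ : ℝ → ℝ)
    (hw₁C : ContDiff ℝ 2 w₁) (hw₂C : ContDiff ℝ 2 w₂)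
    (hw₁ : ∀ z : ℝ, deriv (deriv w₁) z + p z * deriv w₁ z + q z * w₁ z = 0)
    (hw₂ : ∀ z : ℝ, deriv (deriv w₂) z + p z * deriv w₂ z + q z * w₂ z = 0)
    (hw₁odd : ∀ z : ℝ, w₁ (-z) = -w₁ z)
    (hw₁per : ∀ z : ℝ, w₁ (z + L) = w₁ z)
    (hw₁ne : w₁ ≠ 0)
    (hw₂even : ∀ z : ℝ, w₂ (-z) = w₂ z)
    (hw₂nper : ¬ ∀ z : ℝ, w₂ (z + L) = w₂ z) :
    ∀ v : ℝ → ℝ, ContDiff ℝ 2 v →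
      (∀ z : ℝ, deriv (deriv v) z + p z * deriv v z + q z * v z = 0) →
      (∀ z : ℝ, v (-z) = v z) → (∀ z : ℝ, v (z + L) = v z) →
      v = 0 := by
  intro v hvC hvode hveven hvper
  have dv0 : deriv v 0 = 0 := even_deriv_zero v hveven
  have dw₂0 : deriv w₂ 0 = 0 := even_deriv_zero w₂ hw₂even
  have v0 : v 0 = 0 := by
    by_contra h
    set c : ℝ := w₂ 0 / v 0 with hc
    obtain ⟨hd1, hode⟩ := sub_smul_ode p q w₂ v hw₂C hvC hw₂ hvode c
    have huC : ContDiff ℝ 2 (fun z => w₂ z - c * v z) := hw₂C.sub (contDiff_const.mul hvC)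
    have hu0 : (fun z => w₂ z - c * v z) 0 = 0 := by
      simp only [hc]
      field_simp
      ring
    have hu1 : deriv (fun z => w₂ z - c * v z) 0 = 0 := by
      rw [hd1 0, dv0, dw₂0]; ring
    have := uniq_zero p q hp hq _ huC hode hu0 hu1
    apply hw₂nper
    intro z
    have h1 := congrFun this (z + L)
    have h2 := congrFun this z
    simp only [Pi.zero_apply] at h1 h2
    have := hvper z
    linear_combination h1 - h2 + c * this
  exact uniq_zero p q hp hq v hvC hvode v0 dv0
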